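/- arXiv:2208.10537 — 5 statements merged into one kernel-verified Lean document; each statement's English description precedes it below -/
import Mathlib

section
/- Let G = (Γ, S, H) be an irreducible Cayley coset digraph, let r ∈ S, and let D be a 1-factor of G, i.e., a permutation D of the set of left cosets Γ/H such that every pair (x, D(x)) is an edge of G. Then there exists a system of coset representatives R : Γ/H → Γ (with R(x)H = x for every coset x) such that D(gH) = R(gH)·r·H for every coset gH. -/
/-- Theorem 1 (first part): in an irreducible Cayley coset digraph `(Γ, S, H)`,
given `r ∈ S` and a 1-factor `D`, there is a system of coset representatives `R`
such that `D(gH) = R(gH)·r·H` for every coset `gH`. -/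
theorem cayley_coset_one_factor_coset_reps
    {Γ : Type*} [Group Γ] [Fintype Γ] (H : Subgroup Γ) (S : Finset Γ)
    (hSH : ∀ s ∈ S, s ∉ H)
    (hgen : Subgroup.closure ((S : Set Γ) ∪ (H : Set Γ)) = ⊤)
    (hHS : ∀ h ∈ H, ∀ s ∈ S, ∃ t ∈ S, ∃ h' ∈ H, h * s = t * h')
    (hdist : ∀ s ∈ S, ∀ t ∈ S, (s : Γ ⧸ H) = (t : Γ ⧸ H) → s = t)
    (hirr : ∀ s ∈ S, ∀ t ∈ S, ∃ h ∈ H, (s : Γ ⧸ H) = ((h * t : Γ) : Γ ⧸ H))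
    (r : Γ) (hr : r ∈ S)
    (D : Equiv.Perm (Γ ⧸ H))
    (hD : ∀ x : Γ ⧸ H, ∃ g : Γ, ∃ s ∈ S,
        x = (g : Γ ⧸ H) ∧ D x = ((g * s : Γ) : Γ ⧸ H)) :
    ∃ R : Γ ⧸ H → Γ,
      (∀ x : Γ ⧸ H, ((R x : Γ) : Γ ⧸ H) = x) ∧
      (∀ g : Γ, D (g : Γ ⧸ H) = ((R (g : Γ ⧸ H) * r : Γ) : Γ ⧸ H)) := by
  choose g s hs hx hDx using hD
  choose h hh hsr using fun x => hirr (s x) (hs x) r hr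
  refine ⟨fun x => g x * h x, fun x => ?_, fun gg => ?_⟩
  · rw [QuotientGroup.mk_mul_of_mem _ (hh x), ← hx x]
  · set x : Γ ⧸ H := (gg : Γ ⧸ H) with hxdef
    rw [hDx x]
    have key : (s x)⁻¹ * (h x * r) ∈ H := by
      rw [← QuotientGroup.eq]; exact hsr x
    rw [QuotientGroup.eq]
    have : (g x * s x)⁻¹ * (g x * h x * r) = (s x)⁻¹ * (h x * r) := by
      group
    rw [this]
    exact key
end

section
/- Let Γ be a finite group, H a subgroup and S a subset of Γ with S ∩ H = ∅, Γ generated by S ∪ H, HS ⊆ SH, and the cosets sH for s ∈ S pairwise distinct. Define a relation on S by s ∼ t if and only if there exists h ∈ H with hsH = tH. Then ∼ is an equivalence relation on S, and every equivalence class T ⊆ S satisfies HTH = TH (as subsets of Γ); consequently each (Γ, T, H) is an irreducible Cayley coset digraph. -/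
open Pointwise

/-- Theorem 3: the relation `s ∼ t ↔ ∃ h ∈ H, hsH = tH` is an equivalence
relation on `S`, and each equivalence class `T` satisfies `HTH = TH`;
consequently each `(Γ, T, H)` is irreducible. -/
theorem cayley_coset_decomposition_into_irreducible
    {Γ : Type*} [Group Γ] [Fintype Γ] (H : Subgroup Γ) (S : Set Γ)
    (hSH : ∀ s ∈ S, s ∉ H)
    (hgen : Subgroup.closure (S ∪ (H : Set Γ)) = ⊤)
    (hHS : ∀ h ∈ H, ∀ s ∈ S, ∃ t ∈ S, ∃ h' ∈ H, h * s = t * h')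
    (hdist : ∀ s ∈ S, ∀ t ∈ S, (s : Γ ⧸ H) = (t : Γ ⧸ H) → s = t) :
    (∀ s ∈ S, ∃ h ∈ H, ((h * s : Γ) : Γ ⧸ H) = (s : Γ ⧸ H)) ∧
    (∀ s ∈ S, ∀ t ∈ S,
      (∃ h ∈ H, ((h * s : Γ) : Γ ⧸ H) = (t : Γ ⧸ H)) →
      ∃ h ∈ H, ((h * t : Γ) : Γ ⧸ H) = (s : Γ ⧸ H)) ∧
    (∀ s ∈ S, ∀ t ∈ S, ∀ r ∈ S,
      (∃ h ∈ H, ((h * s : Γ) : Γ ⧸ H) = (t : Γ ⧸ H)) →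
      (∃ h ∈ H, ((h * t : Γ) : Γ ⧸ H) = (r : Γ ⧸ H)) →
      ∃ h ∈ H, ((h * s : Γ) : Γ ⧸ H) = (r : Γ ⧸ H)) ∧
    (∀ s ∈ S,
      (H : Set Γ) * {t ∈ S | ∃ h ∈ H, ((h * s : Γ) : Γ ⧸ H) = (t : Γ ⧸ H)} * (H : Set Γ)
        = {t ∈ S | ∃ h ∈ H, ((h * s : Γ) : Γ ⧸ H) = (t : Γ ⧸ H)} * (H : Set Γ)) ∧
    (∀ s ∈ S,
      ∀ t ∈ {t ∈ S | ∃ h ∈ H, ((h * s : Γ) : Γ ⧸ H) = (t : Γ ⧸ H)},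
      ∀ r ∈ {t ∈ S | ∃ h ∈ H, ((h * s : Γ) : Γ ⧸ H) = (t : Γ ⧸ H)},
        ∃ h ∈ H, (t : Γ ⧸ H) = ((h * r : Γ) : Γ ⧸ H)) := by

  have key : ∀ s t : Γ, (∃ h ∈ H, ((h * s : Γ) : Γ ⧸ H) = (t : Γ ⧸ H)) ↔
      ∃ h ∈ H, ∃ k ∈ H, h * s * k = t := by
    intro s t
    constructor
    · rintro ⟨h, hh, he⟩
      rw [QuotientGroup.eq] at he
      exact ⟨h, hh, (h * s)⁻¹ * t, he, by group⟩
    · rintro ⟨h, hh, k, hk, he⟩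
      refine ⟨h, hh, ?_⟩
      rw [QuotientGroup.eq]
      have : (h * s)⁻¹ * t = k := by rw [← he]; group
      rw [this]; exact hk
  have refl : ∀ s : Γ, ∃ h ∈ H, ((h * s : Γ) : Γ ⧸ H) = (s : Γ ⧸ H) := by
    intro s
    exact (key s s).2 ⟨1, H.one_mem, 1, H.one_mem, by group⟩
  have sym : ∀ s t : Γ, (∃ h ∈ H, ((h * s : Γ) : Γ ⧸ H) = (t : Γ ⧸ H)) →
      ∃ h ∈ H, ((h * t : Γ) : Γ ⧸ H) = (s : Γ ⧸ H) := by
    intro s t hst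
    obtain ⟨h, hh, k, hk, he⟩ := (key s t).1 hst
    exact (key t s).2 ⟨h⁻¹, H.inv_mem hh, k⁻¹, H.inv_mem hk, by rw [← he]; group⟩
  have trans : ∀ s t r : Γ, (∃ h ∈ H, ((h * s : Γ) : Γ ⧸ H) = (t : Γ ⧸ H)) →
      (∃ h ∈ H, ((h * t : Γ) : Γ ⧸ H) = (r : Γ ⧸ H)) →
      ∃ h ∈ H, ((h * s : Γ) : Γ ⧸ H) = (r : Γ ⧸ H) := by
    intro s t r hst htr
    obtain ⟨h1, hh1, k1, hk1, he1⟩ := (key s t).1 hst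
    obtain ⟨h2, hh2, k2, hk2, he2⟩ := (key t r).1 htr
    exact (key s r).2 ⟨h2 * h1, H.mul_mem hh2 hh1, k1 * k2, H.mul_mem hk1 hk2,
      by rw [← he2, ← he1]; group⟩
  refine ⟨fun s _ => refl s, fun s _ t _ => sym s t, fun s _ t _ r _ => trans s t r,
    ?_, ?_⟩
  · intro s hs
    ext x
    constructor
    · rintro ⟨y, hy, c, hc, rfl⟩
      obtain ⟨a, ha, b, hb, rfl⟩ := hy
      obtain ⟨hbS, hrel⟩ := hb
      obtain ⟨t', ht'S, h'', hh'', habe⟩ := hHS a ha b hbS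
      obtain ⟨h1, hh1, k1, hk1, he1⟩ := (key s b).1 hrel
      have ht'rel : ∃ h ∈ H, ((h * s : Γ) : Γ ⧸ H) = (t' : Γ ⧸ H) := by
        refine (key s t').2 ⟨a * h1, H.mul_mem ha hh1, k1 * h''⁻¹,
          H.mul_mem hk1 (H.inv_mem hh''), ?_⟩
        have : t' = a * b * h''⁻¹ := by rw [habe]; group
        rw [this, ← he1]; group
      exact ⟨t', ⟨ht'S, ht'rel⟩, h'' * c, H.mul_mem hh'' hc,
        by show t' * (h'' * c) = a * b * c; rw [habe]; group⟩
    · rintro ⟨b, hb, c, hc, rfl⟩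
      exact ⟨b, ⟨1, H.one_mem, b, hb, one_mul b⟩, c, hc, rfl⟩
  · rintro s hs t ⟨htS, hst⟩ r ⟨hrS, hsr⟩
    obtain ⟨h, hh, he⟩ := trans r s t (sym s r hsr) hst
    exact ⟨h, hh, he.symm⟩
end

section
/- Every Cayley coset digraph G = (Γ, S, H) has a 1-factorization labeled by the elements of S: there exists a family of permutations (σ_s)_{s ∈ S} of the coset space Γ/H such that for every coset gH the multiset {σ_s(gH) : s ∈ S} equals the multiset {gsH : s ∈ S}; in particular each (x, σ_s(x)) is an edge of G and the graphs of the σ_s partition the edge set of G. -/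
open Finset

section Decomp

variable {V : Type*} [Fintype V] [DecidableEq V]

/-- Double counting: sum of in-degrees equals sum of out-degrees. -/
lemma sum_indeg_eq_sum_outdeg (N : V → Finset V) :
    ∑ y : V, (univ.filter fun x => y ∈ N x).card = ∑ x : V, (N x).card := by
  have h1 : ∀ y : V, (univ.filter fun x => y ∈ N x).card
      = ∑ x : V, if y ∈ N x then 1 else 0 := fun y => Finset.card_filter _ _
  have h2 : ∀ x : V, (N x).card = ∑ y : V, if y ∈ N x then 1 else 0 := by
    intro x
    rw [← Finset.card_filter]
    congr 1
    rw [Finset.filter_mem_eq_inter, Finset.univ_inter]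
  rw [Finset.sum_congr rfl fun y _ => h1 y, Finset.sum_congr rfl fun x _ => h2 x,
    Finset.sum_comm]

/-- Hall condition for a regular digraph. -/
lemma hall_of_regular (k : ℕ) (N : V → Finset V)
    (hcard : ∀ x, (N x).card = k + 1)
    (hreg : ∀ y : V, (univ.filter fun x => y ∈ N x).card = k + 1) :
    ∀ A : Finset V, A.card ≤ (A.biUnion N).card := by
  intro A
  set B := A.biUnion N with hB
  have hsub : ∀ x ∈ A, N x ⊆ B := fun x hx => Finset.subset_biUnion_of_mem N hx
  have key : (k + 1) * A.card ≤ (k + 1) * B.card := by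
    calc (k + 1) * A.card = ∑ x ∈ A, (N x).card := by
          rw [Finset.sum_congr rfl fun x _ => hcard x, Finset.sum_const, smul_eq_mul, mul_comm]
      _ = ∑ x ∈ A, ∑ y ∈ B, if y ∈ N x then 1 else 0 := by
          refine Finset.sum_congr rfl fun x hx => ?_
          rw [← Finset.card_filter, Finset.filter_mem_eq_inter,
            Finset.inter_eq_right.2 (hsub x hx)]
      _ = ∑ y ∈ B, (A.filter fun x => y ∈ N x).card := by
          rw [Finset.sum_comm]
          exact Finset.sum_congr rfl fun y _ => (Finset.card_filter _ _).symm
      _ ≤ ∑ y ∈ B, (k + 1) := by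
          refine Finset.sum_le_sum fun y _ => ?_
          rw [← hreg y]
          exact Finset.card_le_card (Finset.filter_subset_filter _ (Finset.subset_univ A))
      _ = (k + 1) * B.card := by rw [Finset.sum_const, smul_eq_mul, mul_comm]
  exact Nat.le_of_mul_le_mul_left key (Nat.succ_pos k)

/-- A `k`-regular digraph decomposes into `k` permutations. -/
lemma regular_decomp : ∀ (k : ℕ) (N : V → Finset V), (∀ x, (N x).card = k) →
    (∀ y : V, (univ.filter fun x => y ∈ N x).card = k) →
    ∃ σ : Fin k → Equiv.Perm V,
      ∀ x, ((univ : Finset (Fin k)).val.map fun i => (σ i) x) = (N x).val := by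
  intro k
  induction k with
  | zero =>
    intro N hc _
    refine ⟨fun i => i.elim0, fun x => ?_⟩
    have : (N x).val = 0 := by
      simpa [Finset.card_eq_zero] using hc x
    simp [this]
  | succ k ih =>
    intro N hc hr
    obtain ⟨f, hfinj, hf⟩ := (Finset.all_card_le_biUnion_card_iff_exists_injective N).mp
      (hall_of_regular k N hc hr)
    have hbij : Function.Bijective f := Finite.injective_iff_bijective.mp hfinj
    let τ : Equiv.Perm V := Equiv.ofBijective f hbij
    have hτ : ∀ x, τ x = f x := fun x => rfl
    set N' : V → Finset V := fun x => (N x).erase (f x) with hN'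
    have hc' : ∀ x, (N' x).card = k := by
      intro x
      rw [hN']
      simp only
      rw [Finset.card_erase_of_mem (hf x), hc]
      omega
    have hfilter : ∀ y : V, (univ.filter fun x => y ∈ N' x)
        = (univ.filter fun x => y ∈ N x).erase (τ.symm y) := by
      intro y
      ext x
      simp only [hN', Finset.mem_filter, Finset.mem_univ, true_and, Finset.mem_erase]
      constructor
      · rintro ⟨hne, hmem⟩
        refine ⟨fun hx => hne ?_, hmem⟩
        rw [hx, ← hτ, Equiv.apply_symm_apply]
      · rintro ⟨hne, hmem⟩
        refine ⟨fun hy => hne ?_, hmem⟩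
        rw [hy, ← hτ, Equiv.symm_apply_apply]
    have hr' : ∀ y : V, (univ.filter fun x => y ∈ N' x).card = k := by
      intro y
      have hmem : τ.symm y ∈ univ.filter fun x => y ∈ N x := by
        simp only [Finset.mem_filter, Finset.mem_univ, true_and]
        have hfy : f (τ.symm y) = y := by rw [← hτ, Equiv.apply_symm_apply]
        have := hf (τ.symm y)
        rwa [hfy] at this
      rw [hfilter y, Finset.card_erase_of_mem hmem, hr]
      omega
    obtain ⟨σ', hσ'⟩ := ih N' hc' hr'
    refine ⟨Fin.cons (α := fun _ => Equiv.Perm V) τ σ', fun x => ?_⟩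
    have huniv : ((univ : Finset (Fin (k+1))).val.map
          fun i => (Fin.cons (α := fun _ => Equiv.Perm V) τ σ' i) x)
        = τ x ::ₘ ((univ : Finset (Fin k)).val.map fun i => (σ' i) x) := by
      rw [Fin.univ_succ, Finset.cons_val, Multiset.map_cons, Finset.map_val,
        Multiset.map_map]
      simp only [Function.comp, Function.Embedding.coeFn_mk, Fin.cons_zero, Fin.cons_succ]
    rw [huniv, hσ' x, hτ x]
    have hval : (N' x).val = (N x).val.erase (f x) := Finset.erase_val _ _
    rw [hval, Multiset.cons_erase (hf x)]

end Decomp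

section Coset

variable {Γ : Type*} [Group Γ] (H : Subgroup Γ) (S : Finset Γ)

lemma image_coset_subset [DecidableEq (Γ ⧸ H)]
    (hHS : ∀ h ∈ H, ∀ s ∈ S, ∃ t ∈ S, ∃ h' ∈ H, h * s = t * h')
    {g g' : Γ} (hgg : (g : Γ ⧸ H) = (g' : Γ ⧸ H)) :
    S.image (fun s => ((g' * s : Γ) : Γ ⧸ H)) ⊆ S.image (fun s => ((g * s : Γ) : Γ ⧸ H)) := by
  intro y hy
  simp only [Finset.mem_image] at hy ⊢
  obtain ⟨s, hs, rfl⟩ := hy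
  have hh : g⁻¹ * g' ∈ H := QuotientGroup.eq.mp hgg
  obtain ⟨t, ht, h', hh', heq⟩ := hHS (g⁻¹ * g') hh s hs
  refine ⟨t, ht, ?_⟩
  have hkey : g' * s = g * t * h' := by
    have h2 : g * (g⁻¹ * g' * s) = g * (t * h') := by rw [heq]
    calc g' * s = g * (g⁻¹ * g' * s) := by group
      _ = g * (t * h') := h2
      _ = g * t * h' := by group
  rw [hkey, QuotientGroup.mk_mul_of_mem _ hh']

lemma image_coset_eq [DecidableEq (Γ ⧸ H)]
    (hHS : ∀ h ∈ H, ∀ s ∈ S, ∃ t ∈ S, ∃ h' ∈ H, h * s = t * h')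
    {g g' : Γ} (hgg : (g : Γ ⧸ H) = (g' : Γ ⧸ H)) :
    S.image (fun s => ((g * s : Γ) : Γ ⧸ H)) = S.image (fun s => ((g' * s : Γ) : Γ ⧸ H)) :=
  le_antisymm (image_coset_subset H S hHS hgg.symm) (image_coset_subset H S hHS hgg)

end Coset

/-- Corollary 4: every Cayley coset digraph `(Γ, S, H)` has a 1-factorization
labeled by the elements of `S`: permutations `σ_s` of `Γ ⧸ H` such that for each
coset `gH` the multiset `{σ_s(gH) : s ∈ S}` equals the multiset `{gsH : s ∈ S}`. -/
theorem cayley_coset_one_factorization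
    {Γ : Type*} [Group Γ] [Fintype Γ] (H : Subgroup Γ) (S : Finset Γ)
    (hSH : ∀ s ∈ S, s ∉ H)
    (hgen : Subgroup.closure ((S : Set Γ) ∪ (H : Set Γ)) = ⊤)
    (hHS : ∀ h ∈ H, ∀ s ∈ S, ∃ t ∈ S, ∃ h' ∈ H, h * s = t * h')
    (hdist : ∀ s ∈ S, ∀ t ∈ S, (s : Γ ⧸ H) = (t : Γ ⧸ H) → s = t) :
    ∃ σ : {s : Γ // s ∈ S} → Equiv.Perm (Γ ⧸ H),
      ∀ g : Γ,
        (S.attach.val.map fun s => σ s ((g : Γ ⧸ H))) =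
        (S.val.map fun s => ((g * s : Γ) : Γ ⧸ H)) := by
  classical
  haveI : Fintype (Γ ⧸ H) := Fintype.ofFinite _
  have hsmul : ∀ (a b : Γ), a • ((b : Γ ⧸ H)) = ((a * b : Γ) : Γ ⧸ H) := fun a b => rfl
  -- injectivity of s ↦ gsH on S
  have hinj : ∀ g : Γ, Set.InjOn (fun s => ((g * s : Γ) : Γ ⧸ H)) (S : Set Γ) := by
    intro g s hs t ht h
    apply hdist s hs t ht
    rw [QuotientGroup.eq] at h ⊢
    have he : (g * s)⁻¹ * (g * t) = s⁻¹ * t := by group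
    rwa [he] at h
  -- the neighborhood map
  set N : Γ ⧸ H → Finset (Γ ⧸ H) :=
    fun x => S.image (fun s => ((Quotient.out x * s : Γ) : Γ ⧸ H)) with hN
  have hNg : ∀ g : Γ, N (g : Γ ⧸ H) = S.image (fun s => ((g * s : Γ) : Γ ⧸ H)) := by
    intro g
    rw [hN]
    exact image_coset_eq H S hHS (QuotientGroup.out_eq' (g : Γ ⧸ H))
  have hNx : ∀ x : Γ ⧸ H, N x = S.image (fun s => ((Quotient.out x * s : Γ) : Γ ⧸ H)) :=
    fun x => rfl
  have hcard : ∀ x : Γ ⧸ H, (N x).card = S.card := by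
    intro x
    rw [hNx x, Finset.card_image_of_injOn (hinj _)]
  -- equivariance
  have hequiv : ∀ (a : Γ) (x : Γ ⧸ H), N (a • x) = (N x).image (fun z => a • z) := by
    intro a x
    have hx : ((Quotient.out x : Γ) : Γ ⧸ H) = x := QuotientGroup.out_eq' x
    have hax : a • x = ((a * Quotient.out x : Γ) : Γ ⧸ H) := by
      conv_lhs => rw [← hx]
      exact hsmul a _
    rw [hax, hNg, hNx x, Finset.image_image]
    refine Finset.image_congr fun s _ => ?_
    show ((a * Quotient.out x * s : Γ) : Γ ⧸ H) = a • ((Quotient.out x * s : Γ) : Γ ⧸ H)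
    rw [hsmul, mul_assoc]
  -- in-degree is constant
  have hindeg_const : ∀ y : Γ ⧸ H,
      (univ.filter fun x => y ∈ N x).card
        = (univ.filter fun x => ((1:Γ) : Γ ⧸ H) ∈ N x).card := by
    intro y
    obtain ⟨a, rfl⟩ : ∃ a : Γ, (a : Γ ⧸ H) = y := ⟨Quotient.out y, QuotientGroup.out_eq' y⟩
    have hy1 : (a : Γ ⧸ H) = a • (((1:Γ)) : Γ ⧸ H) := by rw [hsmul, mul_one]
    rw [hy1]
    have himg : (univ.filter fun x => a • (((1:Γ)) : Γ ⧸ H) ∈ N x)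
        = (univ.filter fun x => (((1:Γ)) : Γ ⧸ H) ∈ N x).image (fun x => a • x) := by
      ext x
      simp only [Finset.mem_filter, Finset.mem_univ, true_and, Finset.mem_image]
      constructor
      · intro hmem
        refine ⟨a⁻¹ • x, ?_, by simp⟩
        have hxx : x = a • (a⁻¹ • x) := by simp
        rw [hxx, hequiv, Finset.mem_image] at hmem
        obtain ⟨z, hz, he⟩ := hmem
        have hz1 : z = ((1:Γ) : Γ ⧸ H) := smul_left_cancel a he
        rwa [hz1] at hz
      · rintro ⟨z, hz, rfl⟩
        rw [hequiv]
        exact Finset.mem_image_of_mem _ hz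
    rw [himg, Finset.card_image_of_injective _ (MulAction.injective a)]
  -- regularity
  have hreg : ∀ y : Γ ⧸ H, (univ.filter fun x => y ∈ N x).card = S.card := by
    have hsum := sum_indeg_eq_sum_outdeg N
    have hconst : ∑ y : Γ ⧸ H, (univ.filter fun x => y ∈ N x).card
        = Fintype.card (Γ ⧸ H) * (univ.filter fun x => ((1:Γ) : Γ ⧸ H) ∈ N x).card := by
      rw [Finset.sum_congr rfl fun y _ => hindeg_const y, Finset.sum_const, smul_eq_mul,
        Finset.card_univ]
    have hout : ∑ x : Γ ⧸ H, (N x).card = Fintype.card (Γ ⧸ H) * S.card := by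
      rw [Finset.sum_congr rfl fun x _ => hcard x, Finset.sum_const, smul_eq_mul,
        Finset.card_univ]
    have hne : Fintype.card (Γ ⧸ H) ≠ 0 := Fintype.card_ne_zero
    have h1 : (univ.filter fun x => ((1:Γ) : Γ ⧸ H) ∈ N x).card = S.card :=
      Nat.eq_of_mul_eq_mul_left (Nat.pos_of_ne_zero hne) (by rw [← hconst, hsum, hout])
    intro y
    rw [hindeg_const y, h1]
  obtain ⟨σ', hσ'⟩ := regular_decomp S.card N hcard hreg
  set e : {s : Γ // s ∈ S} ≃ Fin S.card := S.equivFin with he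
  refine ⟨fun s => σ' (e s), fun g => ?_⟩
  have lhs_eq : (S.attach.val.map fun s => σ' (e s) ((g : Γ ⧸ H)))
      = ((univ : Finset (Fin S.card)).val.map fun i => σ' i ((g : Γ ⧸ H))) := by
    rw [← Finset.univ_eq_attach]
    have hmm : ((univ : Finset {s : Γ // s ∈ S}).val.map fun s => σ' (e s) ((g : Γ ⧸ H)))
        = (((univ : Finset {s : Γ // s ∈ S}).val.map e).map fun i => σ' i ((g : Γ ⧸ H))) := by
      rw [Multiset.map_map]; rfl
    rw [hmm]
    congr 1
    calc (univ : Finset {s : Γ // s ∈ S}).val.map ⇑e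
        = (Finset.map (e.symm.symm).toEmbedding (univ : Finset {s : Γ // s ∈ S})).val := by
          rw [Finset.map_val]; rfl
      _ = (univ : Finset (Fin S.card)).val := by rw [Finset.map_univ_equiv]
  rw [lhs_eq, hσ', hNg g, Finset.image_val_of_injOn (hinj g)]
end

section
/- Let n = a·b, U = aℤ/nℤ, π a permutation of {0,…,a−1}, v₀,…,v_{a−1} ∈ U, and Y : ℤ/nℤ → ℤ/nℤ the bijection Y(i + u) = π(i) + u + vᵢ. Fix i ∈ {0,…,a−1} and u ∈ U. Let c be the least positive integer with π^c(i) = i, let v = vᵢ + v_{π(i)} + v_{π²(i)} + ⋯ + v_{π^{c−1}(i)}, and let α be the least positive integer with α·v = 0 in ℤ/nℤ. Then the least positive integer k with Y^k(i + u) = i + u is k = α·c; that is, the cycle of the permutation Y containing i + u has length α·c. -/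
/-- Lemma 12: the cycle of the permutation `Y(i + u) = π(i) + u + vᵢ` containing
`i + u` has length `α·c`, where `c` is the length of the cycle of `π` containing
`i` and `α` is the least positive integer with
`α·(vᵢ + v_{π(i)} + ⋯ + v_{π^{c−1}(i)}) = 0` in `ℤ/nℤ`. -/
theorem difference_set_map_cycle_length
    (n a b : ℕ) (ha : 0 < a) (hb : 0 < b) (hn : n = a * b)
    (π : Equiv.Perm (Fin a)) (v : Fin a → ZMod n)
    (hv : ∀ i : Fin a, ∃ k : ZMod n, v i = (a : ZMod n) * k)
    (Y : ZMod n → ZMod n)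
    (hY : ∀ (i : Fin a) (k : ZMod n),
        Y (((i : ℕ) : ZMod n) + (a : ZMod n) * k) =
          ((π i : ℕ) : ZMod n) + (a : ZMod n) * k + v i)
    (i : Fin a) (u : ZMod n) (k : ZMod n) (hu : u = (a : ZMod n) * k)
    (c : ℕ) (hc1 : 0 < c) (hc2 : (π ^ c) i = i)
    (hc3 : ∀ m : ℕ, 0 < m → m < c → (π ^ m) i ≠ i)
    (α : ℕ) (hα1 : 0 < α)
    (hα2 : α • (∑ j ∈ Finset.range c, v ((π ^ j) i)) = 0)
    (hα3 : ∀ m : ℕ, 0 < m → m < α →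
        m • (∑ j ∈ Finset.range c, v ((π ^ j) i)) ≠ 0) :
    Y^[α * c] (((i : ℕ) : ZMod n) + u) = ((i : ℕ) : ZMod n) + u ∧
    ∀ m : ℕ, 0 < m → m < α * c →
      Y^[m] (((i : ℕ) : ZMod n) + u) ≠ ((i : ℕ) : ZMod n) + u := by
  haveI : NeZero a := ⟨ha.ne'⟩
  -- fixed points of multiples of c
  have hfix : ∀ q : ℕ, (π ^ (q * c)) i = i := by
    intro q
    induction q with
    | zero => simp
    | succ q ih =>
      have h : π ^ ((q + 1) * c) = π ^ (q * c) * π ^ c := by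
        rw [← pow_add, Nat.succ_mul]
      rw [h, Equiv.Perm.mul_apply, hc2, ih]
  -- the partial sums over whole periods
  have hSper : ∀ q : ℕ, ∑ j ∈ Finset.range (q * c), v ((π ^ j) i)
      = q • ∑ j ∈ Finset.range c, v ((π ^ j) i) := by
    intro q
    induction q with
    | zero => simp
    | succ q ih =>
      rw [succ_nsmul, ← ih, Nat.succ_mul, Finset.sum_range_add]
      congr 1
      refine Finset.sum_congr rfl fun j _ => ?_
      congr 1
      rw [add_comm (q * c) j, pow_add, Equiv.Perm.mul_apply, hfix q]
  -- partial sums are multiples of a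
  have hS : ∀ m : ℕ, ∃ km : ZMod n,
      ∑ j ∈ Finset.range m, v ((π ^ j) i) = (a : ZMod n) * km := by
    intro m
    induction m with
    | zero => exact ⟨0, by simp⟩
    | succ m ih =>
      obtain ⟨km, hkm⟩ := ih
      obtain ⟨kv, hkv⟩ := hv ((π ^ m) i)
      exact ⟨km + kv, by rw [Finset.sum_range_succ, hkm, hkv, mul_add]⟩
  -- formula for iterates
  have hiter : ∀ m : ℕ, Y^[m] (((i : ℕ) : ZMod n) + u)
      = (((π ^ m) i : ℕ) : ZMod n) + u + ∑ j ∈ Finset.range m, v ((π ^ j) i) := by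
    intro m
    induction m with
    | zero => simp
    | succ m ih =>
      rw [Function.iterate_succ_apply', ih]
      obtain ⟨km, hkm⟩ := hS m
      have hrw : (((π ^ m) i : ℕ) : ZMod n) + u + ∑ j ∈ Finset.range m, v ((π ^ j) i)
          = (((π ^ m) i : ℕ) : ZMod n) + (a : ZMod n) * (k + km) := by
        rw [hkm, hu, mul_add]; ring
      rw [hrw, hY ((π ^ m) i) (k + km)]
      have hps : (π ^ (m + 1)) i = π ((π ^ m) i) := by
        rw [pow_succ', Equiv.Perm.mul_apply]
      rw [Finset.sum_range_succ, hps, hu, hkm, mul_add]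
      ring
  constructor
  · rw [hiter, hfix α, hSper α, hα2, add_zero]
  · intro m hm hmlt heq
    rw [hiter] at heq
    obtain ⟨km, hkm⟩ := hS m
    have heq' : (((π ^ m) i : ℕ) : ZMod n) + (a : ZMod n) * km
        = ((i : ℕ) : ZMod n) := by
      rw [hkm] at heq
      linear_combination heq
    -- reduce mod a to get (π ^ m) i = i
    have hdvd : a ∣ n := ⟨b, hn⟩
    have heqa : (((π ^ m) i : ℕ) : ZMod a) = ((i : ℕ) : ZMod a) := by
      have h := congrArg (ZMod.castHom hdvd (ZMod a)) heq'
      simpa only [map_add, map_mul, map_natCast, ZMod.natCast_self, zero_mul,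
        add_zero] using h
    have hfin : (π ^ m) i = i := by
      have h1 := ZMod.val_cast_of_lt ((π ^ m) i).isLt
      have h2 := ZMod.val_cast_of_lt i.isLt
      have h3 : (((π ^ m) i : ℕ) : ZMod a).val = ((i : ℕ) : ZMod a).val := by
        rw [heqa]
      rw [h1, h2] at h3
      exact Fin.ext h3
    -- c divides m
    have hmod : m % c = 0 := by
      by_contra hne
      refine hc3 (m % c) (Nat.pos_of_ne_zero hne) (Nat.mod_lt _ hc1) ?_
      calc (π ^ (m % c)) i = (π ^ (m % c)) ((π ^ ((m / c) * c)) i) := by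
            rw [hfix]
        _ = (π ^ m) i := by
            rw [← Equiv.Perm.mul_apply, ← pow_add, Nat.mod_add_div']
        _ = i := hfin
    set q := m / c with hq
    have hm_eq : m = q * c := by
      conv_lhs => rw [← Nat.mod_add_div' m c]
      rw [hmod, zero_add]
    have hq0 : 0 < q := by
      rcases Nat.eq_zero_or_pos q with h | h
      · rw [h, zero_mul] at hm_eq; omega
      · exact h
    have hqlt : q < α := by
      rw [hm_eq] at hmlt
      exact Nat.lt_of_mul_lt_mul_right hmlt
    refine hα3 q hq0 hqlt ?_
    rw [← hSper, ← hm_eq, hkm]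
    rw [hfin] at heq'
    linear_combination heq'
end

section
/- Let n = a·b, U = aℤ/nℤ, π a permutation of {0,…,a−1}, and v₀,…,v_{a−1} ∈ U, with Y(π,(vᵢ))(i + u) = π(i) + u + vᵢ. Define the permutation π′ of {0,…,a−1} by π′(i) = π(i − 1) + 1 (indices and values mod a), and define w₀ = v_{a−1} − a, w_{π^{−1}(a−1)+1} = v_{π^{−1}(a−1)} + a, and wᵢ = v_{i−1} for all other i (where the two exceptional adjustments are cumulative if the indices coincide). Then the map σ(x) = x + 1 on ℤ/nℤ satisfies Y(π′,(wᵢ))(x + 1) = Y(π,(vᵢ))(x) + 1 for all x ∈ ℤ/nℤ; that is, σ is an isomorphism from the digraph with edge set {(x, x+1)} ∪ {(x, Y(π,(vᵢ))(x))} onto the digraph with edge set {(x, x+1)} ∪ {(x, Y(π′,(wᵢ))(x))}. -/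
/-- Lemma 14: with `π′(i) = π(i−1) + 1` (mod `a`) and
`w₀ = v_{a−1} − a`, `w_{π^{−1}(a−1)+1} = v_{π^{−1}(a−1)} + a`, `wᵢ = v_{i−1}`
otherwise (adjustments cumulative if the indices coincide), the translation
`σ(x) = x + 1` satisfies `Y(π′,(wᵢ))(x + 1) = Y(π,(vᵢ))(x) + 1`, hence is an
isomorphism between the corresponding digraphs. -/
theorem difference_set_shift_isomorphism
    (n a b : ℕ) [NeZero a] (ha : 0 < a) (hb : 0 < b) (hn : n = a * b)
    (π π' : Equiv.Perm (Fin a)) (v w : Fin a → ZMod n)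
    (hv : ∀ i : Fin a, ∃ k : ZMod n, v i = (a : ZMod n) * k)
    (hπ' : ∀ i : Fin a, π' i = π (i - 1) + 1)
    (hw : ∀ i : Fin a, w i =
        v (i - 1) + (if i = 0 then -(a : ZMod n) else 0) +
          (if i = π.symm (0 - 1) + 1 then (a : ZMod n) else 0))
    (Y Y' : ZMod n → ZMod n)
    (hY : ∀ (i : Fin a) (k : ZMod n),
        Y (((i : ℕ) : ZMod n) + (a : ZMod n) * k) =
          ((π i : ℕ) : ZMod n) + (a : ZMod n) * k + v i)
    (hY' : ∀ (i : Fin a) (k : ZMod n),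
        Y' (((i : ℕ) : ZMod n) + (a : ZMod n) * k) =
          ((π' i : ℕ) : ZMod n) + (a : ZMod n) * k + w i) :
    (∀ x : ZMod n, Y' (x + 1) = Y x + 1) ∧
    ∀ x y : ZMod n,
      (y = x + 1 ∨ y = Y x) ↔ (y + 1 = (x + 1) + 1 ∨ y + 1 = Y' (x + 1)) := by
  have hn0 : 0 < n := by rw [hn]; positivity
  haveI : NeZero n := ⟨hn0.ne'⟩
  -- cast of successor in Fin a
  have hcast : ∀ j : Fin a, (((j+1 : Fin a) : ℕ) : ZMod n)
      = ((j:ℕ) : ZMod n) + 1 - (if (j+1 : Fin a) = 0 then (a:ZMod n) else 0) := by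
    intro j
    have hval : ((j+1 : Fin a) : ℕ) = ((j:ℕ) + 1) % a := by
      rw [Fin.add_def, Fin.val_one']
      simp [Nat.add_mod]
    by_cases h : (j+1 : Fin a) = 0
    · have h0 : ((j:ℕ)+1) % a = 0 := by rw [← hval, h]; simp
      have hle : (j:ℕ) + 1 ≤ a := j.isLt
      have heq : (j:ℕ) + 1 = a :=
        Nat.le_antisymm hle (Nat.le_of_dvd (Nat.succ_pos _) (Nat.dvd_of_mod_eq_zero h0))
      have hca : ((j:ℕ) : ZMod n) + 1 = (a : ZMod n) := by
        rw [show ((1:ZMod n) = ((1:ℕ):ZMod n)) by simp, ← Nat.cast_add, heq]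
      simp [h, ← hca]
    · have h0 : ((j:ℕ)+1) % a ≠ 0 := by rw [← hval]; exact fun h' => h (Fin.ext (by rw [h']; simp))
      have hlt : (j:ℕ) + 1 < a := by
        have hle : (j:ℕ) + 1 ≤ a := j.isLt
        exact lt_of_le_of_ne hle (fun he => h0 (by rw [he]; simp))
      simp [h, hval, Nat.mod_eq_of_lt hlt]
  have key : ∀ x : ZMod n, Y' (x + 1) = Y x + 1 := by
    intro x
    -- decompose x
    obtain ⟨i, k, rfl⟩ : ∃ (i : Fin a) (k : ZMod n), x = ((i:ℕ) : ZMod n) + (a : ZMod n) * k := by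
      refine ⟨⟨x.val % a, Nat.mod_lt _ ha⟩, ((x.val / a : ℕ) : ZMod n), ?_⟩
      have h1 : ((x.val % a + a * (x.val / a) : ℕ) : ZMod n) = x := by
        rw [Nat.mod_add_div, ZMod.natCast_val, ZMod.cast_id]
      conv_lhs => rw [← h1]
      push_cast; ring
    have e1 : (((i:ℕ) : ZMod n) + (a : ZMod n) * k) + 1
        = (((i+1 : Fin a) : ℕ) : ZMod n)
          + (a : ZMod n) * (k + if (i+1 : Fin a) = 0 then 1 else 0) := by
      rw [hcast i]; split_ifs <;> ring
    rw [e1, hY', hY, hπ' (i+1), hw (i+1)]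
    rw [add_sub_cancel_right]
    have hiff : ((i+1 : Fin a) = π.symm (0-1) + 1) ↔ ((π i + 1 : Fin a) = 0) := by
      rw [add_left_inj, Equiv.eq_symm_apply, eq_sub_iff_add_eq]
    rw [hcast (π i)]
    simp only [hiff]
    split_ifs <;> ring
  refine ⟨key, fun x y => ?_⟩
  rw [key x]
  constructor
  · rintro (rfl | rfl) <;> [left; right] <;> ring
  · rintro (h | h) <;> [left; right] <;> exact by linear_combination h
end
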